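/- (Hamiltonian symmetry reduction by a particular integral in Darboux coordinates.) Let K, a : ℝ^n × ℝ^n → ℝ be smooth with {π_n, K} = a·π_n pointwise, where π_n(q,p) = p_n. Let γ(t) = (q(t), p(t)) be a solution of Hamilton's equations for K on an open interval I such that p_n(t) = 0 for all t ∈ I. Fix any c ∈ ℝ and define the reduced Hamiltonian K̄ : ℝ^{n−1} × ℝ^{n−1} → ℝ by K̄(q̄, p̄) = K(q̄¹,…,q̄^{n−1}, c, p̄₁,…,p̄_{n−1}, 0). Then the projected curve t ↦ (q¹(t),…,q^{n−1}(t), p₁(t),…,p_{n−1}(t)) is a solution of Hamilton's equations for K̄ on ℝ^{n−1} × ℝ^{n−1}. -/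

import Mathlib

open scoped BigOperators

/-- The `i`-th coordinate direction in the `q` (position) factor of phase space `ℝⁿ × ℝⁿ`. -/
noncomputable def eQ (n : ℕ) (i : Fin n) : (Fin n → ℝ) × (Fin n → ℝ) :=
  (Pi.single i 1, 0)

/-- The `i`-th coordinate direction in the `p` (momentum) factor of phase space `ℝⁿ × ℝⁿ`. -/
noncomputable def eP (n : ℕ) (i : Fin n) : (Fin n → ℝ) × (Fin n → ℝ) :=
  (0, Pi.single i 1)

/-- The canonical Poisson bracket `{f,g} = Σᵢ (∂f/∂qⁱ ∂g/∂pᵢ − ∂f/∂pᵢ ∂g/∂qⁱ)` on `ℝⁿ × ℝⁿ`. -/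
noncomputable def poissonBracket {n : ℕ} (f g : (Fin n → ℝ) × (Fin n → ℝ) → ℝ)
    (x : (Fin n → ℝ) × (Fin n → ℝ)) : ℝ :=
  ∑ i : Fin n, (fderiv ℝ f x (eQ n i) * fderiv ℝ g x (eP n i)
    - fderiv ℝ f x (eP n i) * fderiv ℝ g x (eQ n i))

/-- The Hamiltonian vector field `X_f = (∂f/∂p₁,…,∂f/∂pₙ, −∂f/∂q¹,…,−∂f/∂qⁿ)` on `ℝⁿ × ℝⁿ`. -/
noncomputable def hamVF {n : ℕ} (f : (Fin n → ℝ) × (Fin n → ℝ) → ℝ)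
    (x : (Fin n → ℝ) × (Fin n → ℝ)) : (Fin n → ℝ) × (Fin n → ℝ) :=
  (fun i => fderiv ℝ f x (eP n i), fun i => - fderiv ℝ f x (eQ n i))

variable {n : ℕ}

/-- the projection π_n as a CLM -/
noncomputable def piCLM (n : ℕ) : ((Fin (n+1) → ℝ) × (Fin (n+1) → ℝ)) →L[ℝ] ℝ :=
  (ContinuousLinearMap.proj (Fin.last n)).comp (ContinuousLinearMap.snd ℝ _ _)

lemma pi_fderiv (x : (Fin (n+1) → ℝ) × (Fin (n+1) → ℝ)) :
    fderiv ℝ (fun y : (Fin (n+1) → ℝ) × (Fin (n+1) → ℝ) => y.2 (Fin.last n)) x = piCLM n :=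
  (piCLM n).fderiv

lemma lemA (K a : (Fin (n + 1) → ℝ) × (Fin (n + 1) → ℝ) → ℝ)
    (hbracket : ∀ x, poissonBracket (fun y => y.2 (Fin.last n)) K x = a x * x.2 (Fin.last n))
    (x : (Fin (n + 1) → ℝ) × (Fin (n + 1) → ℝ)) :
    fderiv ℝ K x (eQ (n+1) (Fin.last n)) = -(a x * x.2 (Fin.last n)) := by
  have h := hbracket x
  unfold poissonBracket at h
  simp only [pi_fderiv, piCLM, ContinuousLinearMap.comp_apply,
    ContinuousLinearMap.coe_snd', ContinuousLinearMap.proj_apply, eQ, eP] at h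
  rw [Finset.sum_eq_single (Fin.last n)] at h
  · simp at h; rw [eQ]; linarith
  · intro i _ hi
    simp [Pi.single_apply, (by simpa [eq_comm] using hi : ¬ (Fin.last n = i))]
  · simp

lemma lemB (K a : (Fin (n + 1) → ℝ) × (Fin (n + 1) → ℝ) → ℝ)
    (hK : ContDiff ℝ (⊤ : ℕ∞) K) (ha : ContDiff ℝ (⊤ : ℕ∞) a)
    (hA : ∀ x, fderiv ℝ K x (eQ (n+1) (Fin.last n)) = -(a x * x.2 (Fin.last n)))
    (x e : (Fin (n + 1) → ℝ) × (Fin (n + 1) → ℝ))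
    (hx : x.2 (Fin.last n) = 0) (he : e.2 (Fin.last n) = 0) (s : ℝ) :
    fderiv ℝ K (x + s • eQ (n+1) (Fin.last n)) e = fderiv ℝ K x e := by
  have hle : ∀ m : ℕ, (m : WithTop ℕ∞) ≤ ((⊤:ℕ∞) : WithTop ℕ∞) := fun m => by
    exact_mod_cast le_top
  set v := eQ (n+1) (Fin.last n) with hv
  have hK2 : ContDiff ℝ (2 : ℕ) K := hK.of_le (hle 2)
  have hf' : ContDiff ℝ (1 : ℕ) (fderiv ℝ K) := hK2.fderiv_right (by norm_num)
  have hFd : Differentiable ℝ (fun z => fderiv ℝ K z e) :=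
    (hf'.clm_apply contDiff_const).differentiable (by norm_num)
  have hline : ∀ u : ℝ, HasDerivAt (fun s : ℝ => x + s • v) v u := by
    intro u
    simpa using ((hasDerivAt_id u).smul_const v).const_add x
  have hg : Differentiable ℝ (fun u : ℝ => fderiv ℝ K (x + u • v) e) := by
    exact hFd.comp ((differentiable_id.smul_const v).const_add x)
  have key : ∀ u : ℝ, deriv (fun u : ℝ => fderiv ℝ K (x + u • v) e) u = 0 := by
    intro u
    set y := x + u • v with hy
    have hy2 : y.2 = x.2 := by simp [hy, hv, eQ]
    -- second fderiv at y
    have hKd : Differentiable ℝ K := hK.differentiable (by simp)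
    have hf'd : DifferentiableAt ℝ (fderiv ℝ K) y :=
      (hf'.differentiable (by norm_num)) y
    have hsymm := second_derivative_symmetric (fun z => (hKd z).hasFDerivAt)
      hf'd.hasFDerivAt v e
    -- deriv of g at u equals fderiv of (z ↦ fderiv K z e) at y in direction v
    have h1 : HasDerivAt (fun u : ℝ => fderiv ℝ K (x + u • v) e)
        (fderiv ℝ (fun z => fderiv ℝ K z e) y v) u :=
      (hFd y).hasFDerivAt.comp_hasDerivAt (l := fun z => fderiv ℝ K z e) u (hline u)
    rw [h1.deriv]
    have h2 : fderiv ℝ (fun z => fderiv ℝ K z e) y v = (fderiv ℝ (fderiv ℝ K) y v) e := by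
      rw [fderiv_clm_apply hf'd (differentiableAt_const e)]
      simp
    have h3 : (fderiv ℝ (fderiv ℝ K) y e) v = fderiv ℝ (fun z => fderiv ℝ K z v) y e := by
      rw [fderiv_clm_apply hf'd (differentiableAt_const v)]
      simp
    rw [h2, hsymm, h3]
    -- now compute fderiv of z ↦ fderiv K z v = -(a z * z.2 last)
    have hfun : (fun z => fderiv ℝ K z v) = fun z => -(a z * z.2 (Fin.last n)) := by
      funext z; exact hA z
    rw [hfun]
    have had : Differentiable ℝ a := ha.differentiable (by simp)
    have hπ : HasFDerivAt (fun z : (Fin (n+1) → ℝ) × (Fin (n+1) → ℝ) => z.2 (Fin.last n))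
        (piCLM n) y := (piCLM n).hasFDerivAt
    have hm : HasFDerivAt (fun z => -(a z * z.2 (Fin.last n)))
        (-(a y • piCLM n + (y.2 (Fin.last n)) • fderiv ℝ a y)) y :=
      (((had y).hasFDerivAt.mul hπ)).neg
    rw [hm.fderiv]
    have : (piCLM n) e = e.2 (Fin.last n) := rfl
    simp [this, he, hy2, hx]
  have := is_const_of_deriv_eq_zero hg key s 0
  simpa using this

/-- linear `x ↦ Fin.snoc x 0` as a CLM -/
noncomputable def snocCLM (n : ℕ) : (Fin n → ℝ) →L[ℝ] (Fin (n+1) → ℝ) :=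
  ContinuousLinearMap.pi (fun j =>
    Fin.lastCases 0 (fun i => ContinuousLinearMap.proj i) j)

lemma snocCLM_apply (x : Fin n → ℝ) : snocCLM n x = Fin.snoc x 0 := by
  funext j
  refine Fin.lastCases ?_ (fun i => ?_) j <;>
    simp [snocCLM, Fin.snoc_last, Fin.snoc_castSucc]

lemma snocCLM_single (i : Fin n) :
    snocCLM n (Pi.single i 1) = Pi.single i.castSucc (1:ℝ) := by
  funext j
  refine Fin.lastCases ?_ (fun k => ?_) j
  · simp [snocCLM, Pi.single_apply, (Fin.castSucc_lt_last i).ne']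
  · simp [snocCLM, Pi.single_apply, Fin.castSucc_inj]

lemma snoc_single (i : Fin n) :
    (Fin.snoc (Pi.single i (1:ℝ)) (0:ℝ) : Fin (n+1) → ℝ) = Pi.single i.castSucc 1 := by
  funext j
  refine Fin.lastCases ?_ (fun k => ?_) j
  · simp [Pi.single_apply, (Fin.castSucc_lt_last i).ne']
  · simp [Pi.single_apply, Fin.castSucc_inj]

lemma snoc_zero : (Fin.snoc (0 : Fin n → ℝ) (0:ℝ) : Fin (n+1) → ℝ) = 0 := by
  funext j
  refine Fin.lastCases ?_ (fun k => ?_) j <;> simp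

/-- the projection CLM from phase space over `Fin (n+1)` to phase space over `Fin n` -/
noncomputable def projCLM (n : ℕ) :
    ((Fin (n+1) → ℝ) × (Fin (n+1) → ℝ)) →L[ℝ] ((Fin n → ℝ) × (Fin n → ℝ)) :=
  ((ContinuousLinearMap.pi (fun i : Fin n => ContinuousLinearMap.proj i.castSucc)).comp
    (ContinuousLinearMap.fst ℝ _ _)).prod
  ((ContinuousLinearMap.pi (fun i : Fin n => ContinuousLinearMap.proj i.castSucc)).comp
    (ContinuousLinearMap.snd ℝ _ _))

/-- the linear part of the embedding ȳ ↦ (snoc ȳ.1 c, snoc ȳ.2 0) -/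
noncomputable def embCLM (n : ℕ) :
    ((Fin n → ℝ) × (Fin n → ℝ)) →L[ℝ] ((Fin (n+1) → ℝ) × (Fin (n+1) → ℝ)) :=
  ((snocCLM n).comp (ContinuousLinearMap.fst ℝ _ _)).prod
  ((snocCLM n).comp (ContinuousLinearMap.snd ℝ _ _))


/-- (Hamiltonian symmetry reduction by a particular integral in Darboux
coordinates.) If `{π_n, K} = a·π_n` pointwise for `π_n (q,p) = p_n` (the last momentum
coordinate of `ℝ^{n+1}`), and `γ` solves Hamilton's equations for `K` on an open interval
with `p_n ≡ 0` along the curve, then for any `c` the projected curve solves Hamilton's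
equations for the reduced Hamiltonian `K̄(q̄,p̄) = K(q̄, c, p̄, 0)` on `ℝⁿ × ℝⁿ`. -/
theorem projected_curve_solves_reduced_hamilton {n : ℕ}
    (K a : (Fin (n + 1) → ℝ) × (Fin (n + 1) → ℝ) → ℝ)
    (hK : ContDiff ℝ (⊤ : ℕ∞) K) (ha : ContDiff ℝ (⊤ : ℕ∞) a)
    (hbracket : ∀ x, poissonBracket (fun y => y.2 (Fin.last n)) K x = a x * x.2 (Fin.last n))
    (t₁ t₂ : ℝ) (γ : ℝ → (Fin (n + 1) → ℝ) × (Fin (n + 1) → ℝ))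
    (hHam : ∀ t ∈ Set.Ioo t₁ t₂, HasDerivAt γ (hamVF K (γ t)) t)
    (hpn : ∀ t ∈ Set.Ioo t₁ t₂, (γ t).2 (Fin.last n) = 0)
    (c : ℝ) :
    ∀ t ∈ Set.Ioo t₁ t₂,
      HasDerivAt
        (fun s => ((fun i : Fin n => (γ s).1 i.castSucc),
                   (fun i : Fin n => (γ s).2 i.castSucc)))
        (hamVF (fun y : (Fin n → ℝ) × (Fin n → ℝ) => K (Fin.snoc y.1 c, Fin.snoc y.2 0))
          ((fun i : Fin n => (γ t).1 i.castSucc), (fun i : Fin n => (γ t).2 i.castSucc))) t := by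
  intro t ht
  have hA := lemA K a hbracket
  set Kbar : (Fin n → ℝ) × (Fin n → ℝ) → ℝ :=
    fun y => K (Fin.snoc y.1 c, Fin.snoc y.2 0) with hKbar
  set y₀ : (Fin n → ℝ) × (Fin n → ℝ) :=
    ((fun i : Fin n => (γ t).1 i.castSucc), (fun i : Fin n => (γ t).2 i.castSucc)) with hy₀
  set w : (Fin (n+1) → ℝ) × (Fin (n+1) → ℝ) := (Pi.single (Fin.last n) c, 0) with hw
  -- Kbar as K composed with an affine map
  have hKbar' : Kbar = fun y => K (embCLM n y + w) := by
    funext y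
    simp only [hKbar]
    congr 1
    refine Prod.ext ?_ ?_
    · funext j
      refine Fin.lastCases ?_ (fun i => ?_) j <;>
        simp [embCLM, snocCLM_apply, hw, Pi.single_apply, (Fin.castSucc_lt_last _).ne']
    · funext j
      refine Fin.lastCases ?_ (fun i => ?_) j <;>
        simp [embCLM, snocCLM_apply, hw]
  -- the image point
  have himg : embCLM n y₀ + w = γ t + (c - (γ t).1 (Fin.last n)) • eQ (n+1) (Fin.last n) := by
    refine Prod.ext ?_ ?_
    · funext j
      refine Fin.lastCases ?_ (fun i => ?_) j <;>
        simp [embCLM, snocCLM_apply, hw, eQ, hy₀, Pi.single_apply, (Fin.castSucc_lt_last _).ne']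
    · funext j
      refine Fin.lastCases ?_ (fun i => ?_) j <;>
        simp [embCLM, snocCLM_apply, hw, eQ, hy₀, hpn t ht]
  -- fderiv of Kbar
  have hKd : Differentiable ℝ K := hK.differentiable (by simp)
  have haff : ∀ y, HasFDerivAt (fun y => embCLM n y + w) (embCLM n) y := fun y =>
    ((embCLM n).hasFDerivAt).add_const w
  have hKbarDeriv : ∀ (e : (Fin n → ℝ) × (Fin n → ℝ)),
      fderiv ℝ Kbar y₀ e = fderiv ℝ K (embCLM n y₀ + w) (embCLM n e) := by
    intro e
    rw [hKbar']
    have hc := ((hKd (embCLM n y₀ + w)).hasFDerivAt.comp y₀ (haff y₀)).fderiv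
    rw [show (fun y => K ((embCLM n) y + w)) = K ∘ (fun y => (embCLM n) y + w) from rfl, hc]
    rfl
  -- transported basis vectors
  have hembQ : ∀ i : Fin n, embCLM n (eQ n i) = eQ (n+1) i.castSucc := by
    intro i
    refine Prod.ext ?_ ?_
    · show snocCLM n (Pi.single i 1) = Pi.single i.castSucc 1
      rw [snocCLM_apply, snoc_single]
    · show snocCLM n 0 = 0
      exact map_zero _
  have hembP : ∀ i : Fin n, embCLM n (eP n i) = eP (n+1) i.castSucc := by
    intro i
    refine Prod.ext ?_ ?_
    · show snocCLM n 0 = 0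
      exact map_zero _
    · show snocCLM n (Pi.single i 1) = Pi.single i.castSucc 1
      rw [snocCLM_apply, snoc_single]
  -- slice invariance
  have hinv : ∀ e, e.2 (Fin.last n) = 0 →
      fderiv ℝ K (embCLM n y₀ + w) e = fderiv ℝ K (γ t) e := by
    intro e he
    rw [himg]
    exact lemB K a hK ha hA (γ t) e (hpn t ht) he _
  -- the two vector fields agree
  have hvec : hamVF Kbar y₀ = projCLM n (hamVF K (γ t)) := by
    refine Prod.ext ?_ ?_ <;> funext i
    · show fderiv ℝ Kbar y₀ (eP n i) = fderiv ℝ K (γ t) (eP (n+1) i.castSucc)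
      rw [hKbarDeriv, hembP]
      exact hinv _ (by simp [eP, Pi.single_apply, (Fin.castSucc_lt_last i).ne'])
    · show -fderiv ℝ Kbar y₀ (eQ n i) = -fderiv ℝ K (γ t) (eQ (n+1) i.castSucc)
      rw [hKbarDeriv, hembQ]
      congr 1
      exact hinv _ rfl
  have hmain := (projCLM n).hasFDerivAt.comp_hasDerivAt t (hHam t ht)
  rw [hvec]
  exact hmain
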